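/- For every n ≥ 0 there exists an indecomposable representation M of Q with dimension vector (n+1, n, n+1, n+1) together with a short exact sequence of representations 0 → P₂ ⊕ P₄ⁿ → P₁ⁿ⁺¹ → M → 0. -/

import Mathlib

variable (k : Type) [Field k]

/-- A finite-dimensional representation of the quiver `Q` with vertices `1,2,3,4`
and arrows `a : 1 → 2`, `b : 1 → 3`, `c : 2 → 4`, `d : 3 → 4`. -/
structure QRep where
  V1 : Type
  V2 : Type
  V3 : Type
  V4 : Type
  [acg1 : AddCommGroup V1]
  [acg2 : AddCommGroup V2]
  [acg3 : AddCommGroup V3]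
  [acg4 : AddCommGroup V4]
  [mod1 : Module k V1]
  [mod2 : Module k V2]
  [mod3 : Module k V3]
  [mod4 : Module k V4]
  [fin1 : FiniteDimensional k V1]
  [fin2 : FiniteDimensional k V2]
  [fin3 : FiniteDimensional k V3]
  [fin4 : FiniteDimensional k V4]
  ma : V1 →ₗ[k] V2
  mb : V1 →ₗ[k] V3
  mc : V2 →ₗ[k] V4
  md : V3 →ₗ[k] V4

attribute [instance] QRep.acg1 QRep.acg2 QRep.acg3 QRep.acg4
  QRep.mod1 QRep.mod2 QRep.mod3 QRep.mod4
  QRep.fin1 QRep.fin2 QRep.fin3 QRep.fin4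

variable {k}

/-- Morphisms of representations of `Q`. -/
@[ext]
structure QHom (M N : QRep k) where
  f1 : M.V1 →ₗ[k] N.V1
  f2 : M.V2 →ₗ[k] N.V2
  f3 : M.V3 →ₗ[k] N.V3
  f4 : M.V4 →ₗ[k] N.V4
  comm_a : f2 ∘ₗ M.ma = N.ma ∘ₗ f1
  comm_b : f3 ∘ₗ M.mb = N.mb ∘ₗ f1
  comm_c : f4 ∘ₗ M.mc = N.mc ∘ₗ f2
  comm_d : f4 ∘ₗ M.md = N.md ∘ₗ f3

/-- Two representations are isomorphic iff there is a morphism all of whose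
components are bijective. -/
def QIso (M N : QRep k) : Prop :=
  ∃ f : QHom M N, Function.Bijective f.f1 ∧ Function.Bijective f.f2 ∧
    Function.Bijective f.f3 ∧ Function.Bijective f.f4

/-- The zero representation(s). -/
def QRep.IsZeroRep (M : QRep k) : Prop :=
  Subsingleton M.V1 ∧ Subsingleton M.V2 ∧ Subsingleton M.V3 ∧ Subsingleton M.V4

/-- Vertexwise direct sum of representations. -/
def QRep.dsum (M N : QRep k) : QRep k where
  V1 := M.V1 × N.V1
  V2 := M.V2 × N.V2
  V3 := M.V3 × N.V3
  V4 := M.V4 × N.V4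
  ma := M.ma.prodMap N.ma
  mb := M.mb.prodMap N.mb
  mc := M.mc.prodMap N.mc
  md := M.md.prodMap N.md

/-- Direct sum of `n` copies of a representation. -/
def QRep.dpow (M : QRep k) (n : ℕ) : QRep k where
  V1 := Fin n → M.V1
  V2 := Fin n → M.V2
  V3 := Fin n → M.V3
  V4 := Fin n → M.V4
  ma := M.ma.compLeft (Fin n)
  mb := M.mb.compLeft (Fin n)
  mc := M.mc.compLeft (Fin n)
  md := M.md.compLeft (Fin n)

/-- A representation is indecomposable if it is nonzero and not isomorphic to a
direct sum of two nonzero representations. -/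
def QRep.Indecomposable (M : QRep k) : Prop :=
  ¬ M.IsZeroRep ∧ ∀ A B : QRep k, QIso M (A.dsum B) → A.IsZeroRep ∨ B.IsZeroRep

/-- `0 → A → B → C → 0` is short exact (vertexwise). -/
def QShortExact {A B C : QRep k} (f : QHom A B) (g : QHom B C) : Prop :=
  (Function.Injective f.f1 ∧ Function.Injective f.f2 ∧
    Function.Injective f.f3 ∧ Function.Injective f.f4) ∧
  (Function.Surjective g.f1 ∧ Function.Surjective g.f2 ∧
    Function.Surjective g.f3 ∧ Function.Surjective g.f4) ∧
  (LinearMap.range f.f1 = LinearMap.ker g.f1 ∧ LinearMap.range f.f2 = LinearMap.ker g.f2 ∧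
    LinearMap.range f.f3 = LinearMap.ker g.f3 ∧ LinearMap.range f.f4 = LinearMap.ker g.f4)

variable (k)

/-- The `n×n` Jordan block with eigenvalue `lam`, as a linear endomorphism of `kⁿ`. -/
def jordan (n : ℕ) (lam : k) : (Fin n → k) →ₗ[k] (Fin n → k) :=
  Matrix.mulVecLin (Matrix.of fun i j : Fin n =>
    if i = j then lam else if (i : ℕ) + 1 = (j : ℕ) then 1 else 0)

/-- The representation `M_n(λ) = (kⁿ,kⁿ,kⁿ,kⁿ; id,id,id,J_n(λ))`. -/
def Mlam (n : ℕ) (lam : k) : QRep k where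
  V1 := Fin n → k
  V2 := Fin n → k
  V3 := Fin n → k
  V4 := Fin n → k
  ma := LinearMap.id
  mb := LinearMap.id
  mc := LinearMap.id
  md := jordan k n lam

/-- The indecomposable projective `P₁ = (k,k,k,k²)`. -/
def P1 : QRep k where
  V1 := k
  V2 := k
  V3 := k
  V4 := k × k
  ma := LinearMap.id
  mb := LinearMap.id
  mc := LinearMap.inl k k k
  md := LinearMap.inr k k k

/-- The indecomposable projective `P₂ = (0,k,0,k)`. -/
def P2 : QRep k where
  V1 := Fin 0 → k
  V2 := k
  V3 := Fin 0 → k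
  V4 := k
  ma := 0
  mb := 0
  mc := LinearMap.id
  md := 0

/-- The indecomposable projective `P₃ = (0,0,k,k)`. -/
def P3 : QRep k where
  V1 := Fin 0 → k
  V2 := Fin 0 → k
  V3 := k
  V4 := k
  ma := 0
  mb := 0
  mc := 0
  md := LinearMap.id

/-- The indecomposable projective `P₄ = (0,0,0,k)`. -/
def P4 : QRep k where
  V1 := Fin 0 → k
  V2 := Fin 0 → k
  V3 := Fin 0 → k
  V4 := k
  ma := 0
  mb := 0
  mc := 0
  md := 0


/-! ### Auxiliary constructions for statement 9 -/

section Stmt9Aux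

variable (k : Type) [Field k]

/-- The last basis vector `δ = e_n` of `k^{n+1}`. -/
def lastVec (n : ℕ) : Fin (n+1) → k := Pi.single (Fin.last n) 1

/-- Truncation `k^{n+1} → k^n` (drop last coordinate). -/
def Tr (n : ℕ) : (Fin (n+1) → k) →ₗ[k] (Fin n → k) :=
  LinearMap.funLeft k k Fin.castSucc

/-- Shifted inclusion `k^n → k^{n+1}`, `y ↦ (0, y₀, …, y_{n-1})`. -/
def Sh (n : ℕ) : (Fin n → k) →ₗ[k] (Fin (n+1) → k) where
  toFun y := Fin.cons 0 y
  map_add' y z := by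
    funext i
    refine Fin.cases ?_ ?_ i <;> simp
  map_smul' c y := by
    funext i
    refine Fin.cases ?_ ?_ i <;> simp

/-- The nilpotent shift operator `N = Sh ∘ Tr` on `k^{n+1}`. -/
def Nn (n : ℕ) : (Fin (n+1) → k) →ₗ[k] (Fin (n+1) → k) := Sh k n ∘ₗ Tr k n

variable {k}

lemma Tr_apply {n : ℕ} (x : Fin (n+1) → k) (j : Fin n) : Tr k n x j = x j.castSucc := rfl

lemma Tr_surjective {n : ℕ} : Function.Surjective (Tr k n) := by
  intro y
  refine ⟨Fin.snoc y 0, ?_⟩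
  funext j
  rw [Tr_apply, Fin.snoc_castSucc]

lemma Sh_apply_zero {n : ℕ} (y : Fin n → k) : Sh k n y 0 = 0 := rfl

lemma Sh_apply_succ {n : ℕ} (y : Fin n → k) (j : Fin n) : Sh k n y j.succ = y j := by
  simp [Sh]

lemma Sh_injective {n : ℕ} : Function.Injective (Sh k n) := by
  intro y z h
  funext j
  have := congrFun h j.succ
  simpa [Sh_apply_succ] using this

lemma Nn_apply_zero {n : ℕ} (x : Fin (n+1) → k) : Nn k n x 0 = 0 := rfl

lemma Nn_apply_succ {n : ℕ} (x : Fin (n+1) → k) (j : Fin n) :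
    Nn k n x j.succ = x j.castSucc := by
  simp [Nn, Sh_apply_succ, Tr_apply]

lemma Nn_pow_apply {n : ℕ} (m : ℕ) (x : Fin (n+1) → k) (i : Fin (n+1))
    (h : (i : ℕ) < m) : ((Nn k n)^m) x i = 0 := by
  induction m generalizing x i with
  | zero => omega
  | succ m ih =>
    rw [pow_succ']
    rcases Fin.eq_zero_or_eq_succ i with rfl | ⟨j, rfl⟩
    · rw [Module.End.mul_apply]
      exact Nn_apply_zero _
    · rw [Module.End.mul_apply, Nn_apply_succ]
      refine ih _ _ ?_
      have hj : (j : ℕ) + 1 < m + 1 := by rw [← Fin.val_succ]; exact h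
      simp only [Fin.coe_castSucc]
      omega

lemma Nn_pow_eq_zero {n : ℕ} (x : Fin (n+1) → k) : ((Nn k n)^(n+1)) x = 0 := by
  funext i
  exact Nn_pow_apply (n+1) x i (by omega)

lemma eq_smul_lastVec_of_Tr_eq_zero {n : ℕ} (x : Fin (n+1) → k) (h : Tr k n x = 0) :
    x = x (Fin.last n) • lastVec k n := by
  funext i
  rcases Fin.eq_castSucc_or_eq_last i with ⟨j, rfl⟩ | rfl
  · have hx : x j.castSucc = 0 := by
      have := congrFun h j
      simpa [Tr_apply] using this
    have hlv : lastVec k n j.castSucc = 0 :=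
      Pi.single_eq_of_ne (Fin.castSucc_lt_last j).ne 1
    simp [hx, hlv]
  · have hlv : lastVec k n (Fin.last n) = 1 := Pi.single_eq_same _ _
    simp [hlv]

lemma eq_smul_lastVec_of_Nn_eq_zero {n : ℕ} (x : Fin (n+1) → k) (h : Nn k n x = 0) :
    x = x (Fin.last n) • lastVec k n := by
  refine eq_smul_lastVec_of_Tr_eq_zero x ?_
  have : Sh k n (Tr k n x) = Sh k n 0 := by
    simpa [Nn, map_zero] using h
  exact Sh_injective this

lemma lastVec_ne_zero {n : ℕ} : lastVec k n ≠ 0 := by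
  intro h
  have := congrFun h (Fin.last n)
  rw [lastVec, Pi.single_eq_same] at this
  exact one_ne_zero this

lemma Tr_lastVec {n : ℕ} : Tr k n (lastVec k n) = 0 := by
  funext j
  rw [Tr_apply]
  exact Pi.single_eq_of_ne (Fin.castSucc_lt_last j).ne 1

lemma Nn_lastVec {n : ℕ} : Nn k n (lastVec k n) = 0 := by
  simp [Nn, Tr_lastVec]

/-- For a nonzero vector `u`, some power `N^m u` is a nonzero element of `ker N`. -/
lemma exists_ker_elt {n : ℕ} (u : Fin (n+1) → k) (hu : u ≠ 0) :
    ∃ z : Fin (n+1) → k, z ≠ 0 ∧ Nn k n z = 0 ∧ ∃ m : ℕ, ((Nn k n)^m) u = z := by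
  classical
  have hex : ∃ m : ℕ, ((Nn k n)^m) u = 0 := ⟨n+1, Nn_pow_eq_zero u⟩
  have hm0 : Nat.find hex ≠ 0 := by
    intro h
    have := Nat.find_spec hex
    rw [h, pow_zero] at this
    exact hu this
  refine ⟨((Nn k n)^(Nat.find hex - 1)) u, Nat.find_min hex (by omega), ?_, Nat.find hex - 1, rfl⟩
  have hms : (Nn k n) * (Nn k n)^(Nat.find hex - 1) = (Nn k n)^(Nat.find hex) := by
    conv_rhs => rw [show Nat.find hex = (Nat.find hex - 1)+1 by omega]
    rw [pow_succ']
  have : ((Nn k n) * (Nn k n)^(Nat.find hex - 1)) u = 0 := by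
    rw [hms]; exact Nat.find_spec hex
  simpa [Module.End.mul_apply] using this

lemma endo_comm_pow {n : ℕ} (e : (Fin (n+1) → k) →ₗ[k] (Fin (n+1) → k))
    (hc : ∀ x, e (Nn k n x) = Nn k n (e x)) (m : ℕ) (x : Fin (n+1) → k) :
    e (((Nn k n)^m) x) = ((Nn k n)^m) (e x) := by
  induction m generalizing x with
  | zero => simp
  | succ m ih =>
    rw [pow_succ, Module.End.mul_apply, Module.End.mul_apply, ih (Nn k n x), hc]

/-- Key lemma: an idempotent commuting with the full nilpotent Jordan block is `0` or `1`. -/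
lemma idem_endo {n : ℕ} (e : (Fin (n+1) → k) →ₗ[k] (Fin (n+1) → k))
    (hc : ∀ x, e (Nn k n x) = Nn k n (e x)) (hi : ∀ x, e (e x) = e x) :
    (∀ x, e x = 0) ∨ (∀ x, e x = x) := by
  by_contra hcon
  push_neg at hcon
  obtain ⟨⟨v, hv⟩, ⟨w, hw⟩⟩ := hcon
  obtain ⟨z, hz0, hzk, m, hzm⟩ := exists_ker_elt (e v) hv
  have hez : e z = z := by
    rw [← hzm, endo_comm_pow e hc, hi]
  have hz' := eq_smul_lastVec_of_Nn_eq_zero z hzk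
  have hc0 : z (Fin.last n) ≠ 0 := by
    intro h
    rw [h, zero_smul] at hz'
    exact hz0 hz'
  have heδ : e (lastVec k n) = lastVec k n := by
    have h1 : e (z (Fin.last n) • lastVec k n) = z (Fin.last n) • lastVec k n := by
      rw [← hz']; exact hez
    rw [map_smul] at h1
    exact smul_right_injective _ hc0 h1
  have hw' : w - e w ≠ 0 := sub_ne_zero.mpr (fun h => hw h.symm)
  obtain ⟨z', hz0', hzk', m', hzm'⟩ := exists_ker_elt (w - e w) hw'
  have hez' : e z' = 0 := by
    rw [← hzm', endo_comm_pow e hc]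
    have h2 : e (w - e w) = 0 := by
      rw [map_sub, hi, sub_self]
    rw [h2, map_zero]
  have hz'' := eq_smul_lastVec_of_Nn_eq_zero z' hzk'
  have hc0' : z' (Fin.last n) ≠ 0 := by
    intro h
    rw [h, zero_smul] at hz''
    exact hz0' hz''
  have : (0 : Fin (n+1) → k) = z' := by
    rw [← hez', hz'', map_smul, heδ, ← hz'']
  exact hz0' this.symm

variable (k)

/-- The indecomposable representation with dimension vector `(n+1, n, n+1, n+1)`. -/
def Mrep (n : ℕ) : QRep k where
  V1 := Fin (n+1) → k
  V2 := Fin n → k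
  V3 := Fin (n+1) → k
  V4 := Fin (n+1) → k
  ma := Tr k n
  mb := LinearMap.id
  mc := Sh k n
  md := LinearMap.id

/-- First-coordinate projection of the pointwise product. -/
def pr1 (n : ℕ) : (Fin (n+1) → k × k) →ₗ[k] (Fin (n+1) → k) :=
  (LinearMap.fst k k k).compLeft (Fin (n+1))

/-- Second-coordinate projection of the pointwise product. -/
def pr2 (n : ℕ) : (Fin (n+1) → k × k) →ₗ[k] (Fin (n+1) → k) :=
  (LinearMap.snd k k k).compLeft (Fin (n+1))

/-- The fourth component of the quotient map. -/
def gv4 (n : ℕ) : (Fin (n+1) → k × k) →ₗ[k] (Fin (n+1) → k) :=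
  (Nn k n ∘ₗ pr1 k n) + pr2 k n

/-- `(t, y) ↦ (y₀, …, y_{n-1}, t)`. -/
def Usnoc (n : ℕ) : (k × (Fin n → k)) →ₗ[k] (Fin (n+1) → k) where
  toFun p := Fin.snoc p.2 p.1
  map_add' p q := by
    funext i
    refine Fin.lastCases ?_ ?_ i <;> simp [Fin.snoc_last, Fin.snoc_castSucc]
  map_smul' c p := by
    funext i
    refine Fin.lastCases ?_ ?_ i <;> simp [Fin.snoc_last, Fin.snoc_castSucc]

/-- `v ↦ (i ↦ (v i, -(N v) i))`. -/
def Zmap (n : ℕ) : (Fin (n+1) → k) →ₗ[k] (Fin (n+1) → k × k) :=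
  LinearMap.pi fun i => (LinearMap.proj i).prod ((LinearMap.proj i) ∘ₗ (-(Nn k n)))

/-- The second component of the inclusion map. -/
def fv2 (n : ℕ) : (k × (Fin n → Fin 0 → k)) →ₗ[k] (Fin (n+1) → k) where
  toFun p := p.1 • lastVec k n
  map_add' p q := by simp [add_smul]
  map_smul' c p := by simp [mul_smul]

/-- The fourth component of the inclusion map. -/
def fv4 (n : ℕ) : (k × (Fin n → k)) →ₗ[k] (Fin (n+1) → k × k) :=
  Zmap k n ∘ₗ Usnoc k n

variable {k}

lemma pr1_apply {n : ℕ} (w : Fin (n+1) → k × k) (i : Fin (n+1)) : pr1 k n w i = (w i).1 := rfl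
lemma pr2_apply {n : ℕ} (w : Fin (n+1) → k × k) (i : Fin (n+1)) : pr2 k n w i = (w i).2 := rfl

lemma gv4_apply {n : ℕ} (w : Fin (n+1) → k × k) :
    gv4 k n w = Nn k n (pr1 k n w) + pr2 k n w := rfl

lemma Zmap_apply {n : ℕ} (v : Fin (n+1) → k) (i : Fin (n+1)) :
    Zmap k n v i = (v i, -(Nn k n v i)) := rfl

lemma fv2_apply {n : ℕ} (p : k × (Fin n → Fin 0 → k)) :
    fv2 k n p = p.1 • lastVec k n := rfl

lemma Usnoc_apply_last {n : ℕ} (p : k × (Fin n → k)) : Usnoc k n p (Fin.last n) = p.1 := by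
  simp [Usnoc]

lemma Usnoc_apply_castSucc {n : ℕ} (p : k × (Fin n → k)) (j : Fin n) :
    Usnoc k n p j.castSucc = p.2 j := by
  simp [Usnoc]

lemma Usnoc_injective {n : ℕ} : Function.Injective (Usnoc k n) := by
  intro p q h
  refine Prod.ext ?_ ?_
  · have := congrFun h (Fin.last n)
    simpa [Usnoc_apply_last] using this
  · funext j
    have := congrFun h j.castSucc
    simpa [Usnoc_apply_castSucc] using this

lemma Usnoc_zero_snd {n : ℕ} (t : k) :
    Usnoc k n (t, 0) = t • lastVec k n := by
  funext i
  refine Fin.lastCases ?_ ?_ i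
  · rw [Usnoc_apply_last]
    simp [lastVec, Pi.single_eq_same]
  · intro j
    rw [Usnoc_apply_castSucc]
    have : lastVec k n j.castSucc = 0 := Pi.single_eq_of_ne (Fin.castSucc_lt_last j).ne 1
    simp [this]

/-! #### Concrete commutation lemmas for `g` -/

lemma gcomm_a (n : ℕ) :
    Tr k n ∘ₗ (LinearMap.id : k →ₗ[k] k).compLeft (Fin (n+1)) = Tr k n ∘ₗ LinearMap.id := by
  apply LinearMap.ext; intro x
  funext j
  rfl

lemma gcomm_b (n : ℕ) :
    LinearMap.id ∘ₗ (LinearMap.id : k →ₗ[k] k).compLeft (Fin (n+1))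
      = (LinearMap.id : (Fin (n+1) → k) →ₗ[k] (Fin (n+1) → k)) ∘ₗ LinearMap.id := by
  apply LinearMap.ext; intro x
  funext j
  rfl

lemma gcomm_c (n : ℕ) :
    gv4 k n ∘ₗ (LinearMap.inl k k k).compLeft (Fin (n+1)) = Sh k n ∘ₗ Tr k n := by
  apply LinearMap.ext; intro x
  have h1 : pr1 k n (fun i => ((x i, 0) : k × k)) = x := rfl
  have h2 : pr2 k n (fun i => ((x i, 0) : k × k)) = 0 := rfl
  show gv4 k n (fun i => ((x i, 0) : k × k)) = Sh k n (Tr k n x)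
  rw [gv4_apply, h1, h2, add_zero]
  rfl

lemma gcomm_d (n : ℕ) :
    gv4 k n ∘ₗ (LinearMap.inr k k k).compLeft (Fin (n+1))
      = (LinearMap.id : (Fin (n+1) → k) →ₗ[k] (Fin (n+1) → k)) ∘ₗ LinearMap.id := by
  apply LinearMap.ext; intro y
  have h1 : pr1 k n (fun i => (((0 : k), y i) : k × k)) = 0 := rfl
  have h2 : pr2 k n (fun i => (((0 : k), y i) : k × k)) = y := rfl
  show gv4 k n (fun i => (((0 : k), y i) : k × k)) = y
  rw [gv4_apply, h1, h2, map_zero, zero_add]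

/-- The quotient morphism `g : P₁^{n+1} → M`. -/
def gHom (n : ℕ) : QHom ((P1 k).dpow (n+1)) (Mrep k n) where
  f1 := LinearMap.id
  f2 := Tr k n
  f3 := LinearMap.id
  f4 := gv4 k n
  comm_a := gcomm_a n
  comm_b := gcomm_b n
  comm_c := gcomm_c n
  comm_d := gcomm_d n

/-! #### Concrete commutation lemmas for `f` -/

lemma fcomm_a (n : ℕ) :
    fv2 k n ∘ₗ (LinearMap.prodMap (0 : (Fin 0 → k) →ₗ[k] k)
        ((0 : (Fin 0 → k) →ₗ[k] (Fin 0 → k)).compLeft (Fin n)))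
      = ((LinearMap.id : k →ₗ[k] k).compLeft (Fin (n+1))) ∘ₗ
        (0 : ((Fin 0 → k) × (Fin n → Fin 0 → k)) →ₗ[k] (Fin (n+1) → k)) := by
  apply LinearMap.ext; intro p
  simp [fv2_apply]

lemma fcomm_b (n : ℕ) :
    (0 : ((Fin 0 → k) × (Fin n → Fin 0 → k)) →ₗ[k] (Fin (n+1) → k)) ∘ₗ
      (LinearMap.prodMap (0 : (Fin 0 → k) →ₗ[k] (Fin 0 → k))
        ((0 : (Fin 0 → k) →ₗ[k] (Fin 0 → k)).compLeft (Fin n)))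
      = ((LinearMap.id : k →ₗ[k] k).compLeft (Fin (n+1))) ∘ₗ
        (0 : ((Fin 0 → k) × (Fin n → Fin 0 → k)) →ₗ[k] (Fin (n+1) → k)) := by
  apply LinearMap.ext; intro p
  simp

lemma fcomm_c (n : ℕ) :
    fv4 k n ∘ₗ (LinearMap.prodMap (LinearMap.id : k →ₗ[k] k)
        ((0 : (Fin 0 → k) →ₗ[k] k).compLeft (Fin n)))
      = ((LinearMap.inl k k k).compLeft (Fin (n+1))) ∘ₗ fv2 k n := by
  apply LinearMap.ext; intro p
  show fv4 k n (p.1, fun _ => 0) = _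
  have hz : ((fun _ => 0 : Fin n → k)) = (0 : Fin n → k) := rfl
  rw [hz]
  show Zmap k n (Usnoc k n (p.1, 0)) = _
  rw [Usnoc_zero_snd]
  have hN : Nn k n (p.1 • lastVec k n) = 0 := by
    rw [map_smul, Nn_lastVec, smul_zero]
  funext i
  rw [Zmap_apply, hN]
  show ((p.1 • lastVec k n) i, -((0 : Fin (n+1) → k) i)) = ((fv2 k n p) i, 0)
  rw [fv2_apply]
  simp

lemma fcomm_d (n : ℕ) :
    fv4 k n ∘ₗ (LinearMap.prodMap (0 : (Fin 0 → k) →ₗ[k] k)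
        ((0 : (Fin 0 → k) →ₗ[k] k).compLeft (Fin n)))
      = ((LinearMap.inr k k k).compLeft (Fin (n+1))) ∘ₗ
        (0 : ((Fin 0 → k) × (Fin n → Fin 0 → k)) →ₗ[k] (Fin (n+1) → k)) := by
  apply LinearMap.ext; intro p
  have h : (LinearMap.prodMap (0 : (Fin 0 → k) →ₗ[k] k)
      ((0 : (Fin 0 → k) →ₗ[k] k).compLeft (Fin n))) p = 0 := by
    refine Prod.ext (by simp) ?_
    funext j
    simp [LinearMap.compLeft]
    rfl
  rw [LinearMap.comp_apply, h, map_zero, LinearMap.comp_apply, LinearMap.zero_apply, map_zero]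

/-- The inclusion `f : P₂ ⊕ P₄ⁿ → P₁^{n+1}`. -/
def fHom (n : ℕ) : QHom ((P2 k).dsum ((P4 k).dpow n)) ((P1 k).dpow (n+1)) where
  f1 := 0
  f2 := fv2 k n
  f3 := 0
  f4 := fv4 k n
  comm_a := fcomm_a n
  comm_b := fcomm_b n
  comm_c := fcomm_c n
  comm_d := fcomm_d n

/-! #### Indecomposability -/

lemma decomp_lemma {n : ℕ} (A B : QRep k)
    (φ1 : (Fin (n+1) → k) →ₗ[k] A.V1 × B.V1)
    (φ2 : (Fin n → k) →ₗ[k] A.V2 × B.V2)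
    (φ3 : (Fin (n+1) → k) →ₗ[k] A.V3 × B.V3)
    (φ4 : (Fin (n+1) → k) →ₗ[k] A.V4 × B.V4)
    (hb1 : Function.Bijective φ1) (hb2 : Function.Bijective φ2)
    (hb3 : Function.Bijective φ3) (hb4 : Function.Bijective φ4)
    (hca : ∀ x, φ2 (Tr k n x) = (A.ma.prodMap B.ma) (φ1 x))
    (hcb : ∀ x, φ3 x = (A.mb.prodMap B.mb) (φ1 x))
    (hcc : ∀ y, φ4 (Sh k n y) = (A.mc.prodMap B.mc) (φ2 y))
    (hcd : ∀ x, φ4 x = (A.md.prodMap B.md) (φ3 x)) :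
    A.IsZeroRep ∨ B.IsZeroRep := by
  let E1 := LinearEquiv.ofBijective φ1 hb1
  let E2 := LinearEquiv.ofBijective φ2 hb2
  let E3 := LinearEquiv.ofBijective φ3 hb3
  let E4 := LinearEquiv.ofBijective φ4 hb4
  have hE1' : ∀ y, φ1 (E1.symm y) = y := fun y => E1.apply_symm_apply y
  have hE2' : ∀ y, φ2 (E2.symm y) = y := fun y => E2.apply_symm_apply y
  have hE3' : ∀ y, φ3 (E3.symm y) = y := fun y => E3.apply_symm_apply y
  have hE4' : ∀ y, φ4 (E4.symm y) = y := fun y => E4.apply_symm_apply y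
  have claim31 : ∀ x, E3.symm ((φ3 x).1, 0) = E1.symm ((φ1 x).1, 0) := by
    intro x
    apply hb3.injective
    rw [hE3', hcb (E1.symm ((φ1 x).1, 0)), hE1', hcb x]
    simp
  have claim43 : ∀ x, E4.symm ((φ4 x).1, 0) = E3.symm ((φ3 x).1, 0) := by
    intro x
    apply hb4.injective
    rw [hE4', hcd (E3.symm ((φ3 x).1, 0)), hE3', hcd x]
    simp
  have claim21 : ∀ x, E2.symm ((φ2 (Tr k n x)).1, 0) = Tr k n (E1.symm ((φ1 x).1, 0)) := by
    intro x
    apply hb2.injective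
    rw [hE2', hca (E1.symm ((φ1 x).1, 0)), hE1', hca x]
    simp
  have claim42 : ∀ y, E4.symm ((φ4 (Sh k n y)).1, 0) = Sh k n (E2.symm ((φ2 y).1, 0)) := by
    intro y
    apply hb4.injective
    rw [hE4', hcc (E2.symm ((φ2 y).1, 0)), hE2', hcc y]
    simp
  set e1 : (Fin (n+1) → k) →ₗ[k] (Fin (n+1) → k) :=
    E1.symm.toLinearMap ∘ₗ (LinearMap.prodMap LinearMap.id 0) ∘ₗ φ1 with he1def
  have he1 : ∀ x, e1 x = E1.symm ((φ1 x).1, 0) := by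
    intro x
    simp [he1def]
  have hNcomm : ∀ x, e1 (Nn k n x) = Nn k n (e1 x) := by
    intro x
    have l1 : e1 (Nn k n x) = Sh k n (Tr k n (E1.symm ((φ1 x).1, 0))) := by
      rw [he1, show Nn k n x = Sh k n (Tr k n x) from rfl, ← claim31, ← claim43, claim42,
        claim21]
    rw [l1, he1]
    rfl
  have hidem : ∀ x, e1 (e1 x) = e1 x := by
    intro x
    rw [he1 (e1 x), he1 x, hE1']
  rcases idem_endo e1 hNcomm hidem with h0 | hid
  · left
    have h03 : ∀ x, E3.symm ((φ3 x).1, 0) = 0 := fun x => by rw [claim31, ← he1]; exact h0 x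
    have h04 : ∀ x, E4.symm ((φ4 x).1, 0) = 0 := fun x => by rw [claim43]; exact h03 x
    have h02 : ∀ y, E2.symm ((φ2 y).1, 0) = 0 := by
      intro y
      obtain ⟨x, rfl⟩ := Tr_surjective y
      rw [claim21, ← he1, h0, map_zero]
    refine ⟨?_, ?_, ?_, ?_⟩
    · refine subsingleton_of_forall_eq 0 (fun a => ?_)
      obtain ⟨x, hx⟩ := hb1.surjective (a, 0)
      have h := h0 x
      rw [he1, hx] at h
      have h2 : ((a, 0) : A.V1 × B.V1) = 0 := by
        apply E1.symm.injective
        rw [map_zero]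
        exact h
      exact congrArg Prod.fst h2
    · refine subsingleton_of_forall_eq 0 (fun a => ?_)
      obtain ⟨y, hy⟩ := hb2.surjective (a, 0)
      have h := h02 y
      rw [hy] at h
      have h2 : ((a, 0) : A.V2 × B.V2) = 0 := by
        apply E2.symm.injective
        rw [map_zero]
        exact h
      exact congrArg Prod.fst h2
    · refine subsingleton_of_forall_eq 0 (fun a => ?_)
      obtain ⟨x, hx⟩ := hb3.surjective (a, 0)
      have h := h03 x
      rw [hx] at h
      have h2 : ((a, 0) : A.V3 × B.V3) = 0 := by
        apply E3.symm.injective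
        rw [map_zero]
        exact h
      exact congrArg Prod.fst h2
    · refine subsingleton_of_forall_eq 0 (fun a => ?_)
      obtain ⟨x, hx⟩ := hb4.surjective (a, 0)
      have h := h04 x
      rw [hx] at h
      have h2 : ((a, 0) : A.V4 × B.V4) = 0 := by
        apply E4.symm.injective
        rw [map_zero]
        exact h
      exact congrArg Prod.fst h2
  · right
    have hid1 : ∀ x, E1.symm ((φ1 x).1, 0) = x := fun x => by rw [← he1]; exact hid x
    have hid3 : ∀ x, E3.symm ((φ3 x).1, 0) = x := fun x => by rw [claim31]; exact hid1 x
    have hid4 : ∀ x, E4.symm ((φ4 x).1, 0) = x := fun x => by rw [claim43]; exact hid3 x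
    have hid2 : ∀ y, E2.symm ((φ2 y).1, 0) = y := by
      intro y
      obtain ⟨x, rfl⟩ := Tr_surjective y
      rw [claim21, ← he1, hid x]
    refine ⟨?_, ?_, ?_, ?_⟩
    · refine subsingleton_of_forall_eq 0 (fun b => ?_)
      obtain ⟨x, hx⟩ := hb1.surjective (0, b)
      have h := hid1 x
      rw [hx] at h
      have hx0 : x = 0 := by rw [← h]; exact map_zero _
      have h2 : ((0, b) : A.V1 × B.V1) = 0 := by rw [← hx, hx0, map_zero]
      exact congrArg Prod.snd h2
    · refine subsingleton_of_forall_eq 0 (fun b => ?_)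
      obtain ⟨y, hy⟩ := hb2.surjective (0, b)
      have h := hid2 y
      rw [hy] at h
      have hy0 : y = 0 := by rw [← h]; exact map_zero _
      have h2 : ((0, b) : A.V2 × B.V2) = 0 := by rw [← hy, hy0, map_zero]
      exact congrArg Prod.snd h2
    · refine subsingleton_of_forall_eq 0 (fun b => ?_)
      obtain ⟨x, hx⟩ := hb3.surjective (0, b)
      have h := hid3 x
      rw [hx] at h
      have hx0 : x = 0 := by rw [← h]; exact map_zero _
      have h2 : ((0, b) : A.V3 × B.V3) = 0 := by rw [← hx, hx0, map_zero]
      exact congrArg Prod.snd h2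
    · refine subsingleton_of_forall_eq 0 (fun b => ?_)
      obtain ⟨x, hx⟩ := hb4.surjective (0, b)
      have h := hid4 x
      rw [hx] at h
      have hx0 : x = 0 := by rw [← h]; exact map_zero _
      have h2 : ((0, b) : A.V4 × B.V4) = 0 := by rw [← hx, hx0, map_zero]
      exact congrArg Prod.snd h2

lemma Mrep_indec (n : ℕ) : (Mrep k n).Indecomposable := by
  constructor
  · rintro ⟨h1, -, -, -⟩
    have hs : Subsingleton (Fin (n+1) → k) := h1
    exact one_ne_zero (congrFun (@Subsingleton.elim _ hs (fun _ => (1:k)) 0) 0)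
  · rintro A B ⟨φ, hb1, hb2, hb3, hb4⟩
    exact decomp_lemma A B φ.f1 φ.f2 φ.f3 φ.f4 hb1 hb2 hb3 hb4
      (fun x => LinearMap.congr_fun φ.comm_a x)
      (fun x => LinearMap.congr_fun φ.comm_b x)
      (fun y => LinearMap.congr_fun φ.comm_c y)
      (fun x => LinearMap.congr_fun φ.comm_d x)

/-! #### Exactness -/

lemma f1_inj (n : ℕ) :
    Function.Injective (0 : ((Fin 0 → k) × (Fin n → Fin 0 → k)) →ₗ[k] (Fin (n+1) → k)) :=
  fun a b _ => Subsingleton.elim a b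

lemma fv2_inj {n : ℕ} : Function.Injective (fv2 k n) := by
  intro p q h
  rw [fv2_apply, fv2_apply] at h
  have h1 := congrFun h (Fin.last n)
  simp [lastVec, Pi.single_eq_same] at h1
  exact Prod.ext h1 (Subsingleton.elim _ _)

lemma fv4_inj {n : ℕ} : Function.Injective (fv4 k n) := by
  intro p q h
  apply Usnoc_injective
  funext i
  have h2 : Zmap k n (Usnoc k n p) i = Zmap k n (Usnoc k n q) i := congrFun h i
  rw [Zmap_apply, Zmap_apply] at h2
  exact congrArg Prod.fst h2

lemma id_surj (n : ℕ) :
    Function.Surjective (LinearMap.id : (Fin (n+1) → k) →ₗ[k] (Fin (n+1) → k)) :=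
  fun x => ⟨x, rfl⟩

lemma gv4_surj {n : ℕ} : Function.Surjective (gv4 k n) := by
  intro v
  refine ⟨fun i => (0, v i), ?_⟩
  have h1 : pr1 k n (fun i => ((0 : k), v i)) = 0 := rfl
  have h2 : pr2 k n (fun i => ((0 : k), v i)) = v := rfl
  rw [gv4_apply, h1, h2, map_zero, zero_add]

lemma frange1 (n : ℕ) :
    LinearMap.range (0 : ((Fin 0 → k) × (Fin n → Fin 0 → k)) →ₗ[k] (Fin (n+1) → k))
      = LinearMap.ker (LinearMap.id : (Fin (n+1) → k) →ₗ[k] (Fin (n+1) → k)) := by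
  rw [LinearMap.range_zero, LinearMap.ker_id]

lemma frange2 (n : ℕ) : LinearMap.range (fv2 k n) = LinearMap.ker (Tr k n) := by
  ext x
  simp only [LinearMap.mem_range, LinearMap.mem_ker]
  constructor
  · rintro ⟨p, rfl⟩
    rw [fv2_apply, map_smul, Tr_lastVec, smul_zero]
  · intro h
    exact ⟨(x (Fin.last n), 0), by
      rw [fv2_apply]
      exact (eq_smul_lastVec_of_Tr_eq_zero x h).symm⟩

lemma frange4 (n : ℕ) : LinearMap.range (fv4 k n) = LinearMap.ker (gv4 k n) := by
  ext w
  simp only [LinearMap.mem_range, LinearMap.mem_ker]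
  constructor
  · rintro ⟨p, rfl⟩
    have h1 : pr1 k n (Zmap k n (Usnoc k n p)) = Usnoc k n p := rfl
    have h2 : pr2 k n (Zmap k n (Usnoc k n p)) = -(Nn k n (Usnoc k n p)) := rfl
    show gv4 k n (Zmap k n (Usnoc k n p)) = 0
    rw [gv4_apply, h1, h2, add_neg_cancel]
  · intro hw
    have hw' : Nn k n (pr1 k n w) + pr2 k n w = 0 := hw
    refine ⟨(((w (Fin.last n)).1, fun j => (w j.castSucc).1) : k × (Fin n → k)), ?_⟩
    have hu : Usnoc k n ((w (Fin.last n)).1, fun j => (w j.castSucc).1) = pr1 k n w := by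
      funext i
      refine Fin.lastCases ?_ ?_ i
      · rw [Usnoc_apply_last]
        rfl
      · intro j
        rw [Usnoc_apply_castSucc]
        rfl
    show Zmap k n (Usnoc k n _) = w
    rw [hu]
    funext i
    rw [Zmap_apply]
    refine Prod.ext rfl ?_
    have h := congrFun hw' i
    simp only [Pi.add_apply, Pi.zero_apply] at h
    exact neg_eq_of_add_eq_zero_right h

end Stmt9Aux

/-- there is an indecomposable representation `M` of `Q` with the
given dimension vector together with a short exact sequence as indicated. -/
theorem stmt9 (k : Type) [Field k] (n : ℕ) :
    ∃ M : QRep k, M.Indecomposable ∧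
      Module.finrank k M.V1 = n+1 ∧ Module.finrank k M.V2 = n ∧
      Module.finrank k M.V3 = n+1 ∧ Module.finrank k M.V4 = n+1 ∧
      ∃ (f : QHom ((P2 k).dsum ((P4 k).dpow n)) ((P1 k).dpow (n+1))) (g : QHom ((P1 k).dpow (n+1)) M), QShortExact f g := by
  refine ⟨Mrep k n, Mrep_indec n, Module.finrank_fin_fun k, Module.finrank_fin_fun k,
    Module.finrank_fin_fun k, Module.finrank_fin_fun k, fHom n, gHom n,
    ⟨f1_inj n, fv2_inj, f1_inj n, fv4_inj⟩,
    ⟨id_surj n, Tr_surjective, id_surj n, gv4_surj⟩,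
    ⟨frange1 n, frange2 n, frange1 n, frange4 n⟩⟩
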